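/- Let σ ⊆ N_ℚ be a nonzero strongly convex polyhedral cone and ∂ a nontrivial homogeneous LFIHD on A = k[σ^∨ ∩ M] of degree e ∈ M. Then (i) there is a ray ρ ∈ σ(1) with ker ∂ = k[ρ* ∩ M], and (ii) e is a Demazure root of σ whose distinguished ray is ρ; in particular e ∉ σ^∨. -/

import Mathlib

open scoped Pointwise

/-- The standard pairing between `M_ℚ` and `N_ℚ`, both identified with `Fin n → ℚ`. -/
def pairQ {n : ℕ} (m v : Fin n → ℚ) : ℚ := ∑ i, m i * v i

/-- The conical hull (set of nonnegative rational combinations) of a set. -/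
def coneHull {n : ℕ} (S : Set (Fin n → ℚ)) : Set (Fin n → ℚ) :=
  {v | ∃ (T : Finset (Fin n → ℚ)) (c : (Fin n → ℚ) → ℚ),
      ↑T ⊆ S ∧ (∀ x ∈ T, 0 ≤ c x) ∧ v = ∑ x ∈ T, c x • x}

/-- A polyhedral cone is the conical hull of a finite set. -/
def IsPolyhedralCone {n : ℕ} (σ : Set (Fin n → ℚ)) : Prop :=
  ∃ S : Finset (Fin n → ℚ), σ = coneHull ↑S

/-- A cone is strongly convex (pointed) if it contains no line. -/
def IsStronglyConvex {n : ℕ} (σ : Set (Fin n → ℚ)) : Prop :=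
  ∀ v ∈ σ, -v ∈ σ → v = 0

/-- The dual cone `σ^∨ ⊆ M_ℚ` of a cone `σ ⊆ N_ℚ`. -/
def dualCone {n : ℕ} (σ : Set (Fin n → ℚ)) : Set (Fin n → ℚ) :=
  {m | ∀ v ∈ σ, 0 ≤ pairQ m v}

/-- A `σ`-polyhedron: Minkowski sum of a (nonempty) polytope with the cone `σ`. -/
def IsSigmaPolyhedron {n : ℕ} (σ Δ : Set (Fin n → ℚ)) : Prop :=
  ∃ Q : Finset (Fin n → ℚ), Q.Nonempty ∧ Δ = convexHull ℚ ↑Q + σ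

/-- Cast a lattice point of `ℤⁿ` into `ℚⁿ`. -/
def castZ {n : ℕ} (m : Fin n → ℤ) : Fin n → ℚ := fun i => (m i : ℚ)

/-- Integral pairing between lattice vectors of `M` and `N`. -/
def pairZ {n : ℕ} (m ρ : Fin n → ℤ) : ℤ := ∑ i, m i * ρ i

/-- `ρ ∈ N` is the primitive lattice generator of a ray (one-dimensional face) of `σ`. -/
def IsRayGen {n : ℕ} (σ : Set (Fin n → ℚ)) (ρ : Fin n → ℤ) : Prop :=
  castZ ρ ∈ σ ∧ ρ ≠ 0 ∧
  (∀ u : Fin n → ℤ, (∃ q : ℚ, 0 ≤ q ∧ castZ u = q • castZ ρ) → ∃ c : ℕ, u = c • ρ) ∧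
  ∃ u ∈ dualCone σ, σ ∩ {v | pairQ u v = 0} = {v | ∃ q : ℚ, 0 ≤ q ∧ v = q • castZ ρ}

/-- `e ∈ M` is a Demazure root of `σ` with distinguished ray `ρ`: `⟨e,ρ⟩ = −1` and
`⟨e,ρ'⟩ ≥ 0` for every other ray `ρ'` of `σ`. -/
def IsDemazureRootWith {n : ℕ} (σ : Set (Fin n → ℚ)) (e ρ : Fin n → ℤ) : Prop :=
  IsRayGen σ ρ ∧ pairZ e ρ = -1 ∧
  ∀ ρ' : Fin n → ℤ, IsRayGen σ ρ' → ρ' = ρ ∨ 0 ≤ pairZ e ρ'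

/-- A locally finite iterative higher derivation (LFIHD) on a `k`-algebra `A`: a sequence of
`k`-linear operators `D i` with `D 0 = id`, satisfying the Leibniz rule, locally finite, and
iterative. Equivalently, `f ↦ Σᵢ D i f · xⁱ` defines a `G_a`-action on `Spec A`. -/
structure LFIHD (k A : Type*) [CommSemiring k] [CommRing A] [Algebra k A] where
  D : ℕ → A →ₗ[k] A
  D_zero : D 0 = LinearMap.id
  leibniz : ∀ (i : ℕ) (f g : A),
    D i (f * g) = ∑ j ∈ Finset.range (i + 1), D j f * D (i - j) g
  locally_finite : ∀ f : A, ∃ N : ℕ, ∀ i : ℕ, N ≤ i → D i f = 0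
  iterative : ∀ (i j : ℕ) (f : A), D i (D j f) = (i + j).choose i • D (i + j) f

/-- The kernel of an LFIHD: the ring of invariants of the associated `G_a`-action. -/
def LFIHD.ker {k A : Type*} [CommSemiring k] [CommRing A] [Algebra k A]
    (δ : LFIHD k A) : Set A :=
  {f : A | ∀ i : ℕ, 0 < i → δ.D i f = 0}

/-- An LFIHD is nontrivial if it is nonzero in some positive degree. -/
def LFIHD.IsNontrivial {k A : Type*} [CommSemiring k] [CommRing A] [Algebra k A]
    (δ : LFIHD k A) : Prop :=
  ∃ (f : A) (i : ℕ), 0 < i ∧ δ.D i f ≠ 0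

/-- An LFIHD on the `M`-graded algebra `k[σ^∨ ∩ M]` is homogeneous of degree `e ∈ M` if
`δ^{(i)}` maps the graded piece of degree `m` into the piece of degree `m + i·e`. -/
def IsHomogeneousOfDegree {n : ℕ} {k : Type*} [Field k] {P : AddSubmonoid (Fin n → ℤ)}
    (δ : LFIHD k (AddMonoidAlgebra k P)) (e : Fin n → ℤ) : Prop :=
  ∀ (i : ℕ) (m m' : P),
    (δ.D i (AddMonoidAlgebra.single m 1)).coeff m' ≠ 0 → (m' : Fin n → ℤ) = (m : Fin n → ℤ) + i • e

namespace Aux19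

variable {n : ℕ}

lemma pairQ_add_left (x y v : Fin n → ℚ) : pairQ (x + y) v = pairQ x v + pairQ y v := by
  simp [pairQ, add_mul, Finset.sum_add_distrib]

lemma pairQ_add_right (u x y : Fin n → ℚ) : pairQ u (x + y) = pairQ u x + pairQ u y := by
  simp [pairQ, mul_add, Finset.sum_add_distrib]

lemma pairQ_smul_left (q : ℚ) (x v : Fin n → ℚ) : pairQ (q • x) v = q * pairQ x v := by
  simp [pairQ, Finset.mul_sum, mul_assoc]

lemma pairQ_smul_right (q : ℚ) (u x : Fin n → ℚ) : pairQ u (q • x) = q * pairQ u x := by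
  simp [pairQ, Finset.mul_sum]; ring_nf
  exact Finset.sum_congr rfl fun i _ => by ring

lemma pairQ_zero_right (u : Fin n → ℚ) : pairQ u 0 = 0 := by simp [pairQ]

lemma pairQ_zero_left (u : Fin n → ℚ) : pairQ 0 u = 0 := by simp [pairQ]

lemma pairQ_neg_right (u x : Fin n → ℚ) : pairQ u (-x) = - pairQ u x := by
  simp [pairQ]

lemma pairQ_sub_left (x y v : Fin n → ℚ) : pairQ (x - y) v = pairQ x v - pairQ y v := by
  simp [pairQ, sub_mul, Finset.sum_sub_distrib]

lemma pairQ_sub_right (u x y : Fin n → ℚ) : pairQ u (x - y) = pairQ u x - pairQ u y := by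
  simp [pairQ, mul_sub, Finset.sum_sub_distrib]

lemma pairQ_sum_right (u : Fin n → ℚ) (T : Finset (Fin n → ℚ)) (f : (Fin n → ℚ) → (Fin n → ℚ)) :
    pairQ u (∑ x ∈ T, f x) = ∑ x ∈ T, pairQ u (f x) := by
  classical
  induction T using Finset.induction_on with
  | empty => simp [pairQ]
  | insert _ _ h ih => rw [Finset.sum_insert h, Finset.sum_insert h, pairQ_add_right, ih]

lemma pairQ_self_pos {v : Fin n → ℚ} (hv : v ≠ 0) : 0 < pairQ v v := by
  have h1 : ∃ j, v j ≠ 0 := by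
    by_contra h; push_neg at h; exact hv (funext h)
  obtain ⟨j, hj⟩ := h1
  have hterm : 0 < v j * v j := by
    rcases lt_or_gt_of_ne hj with h | h
    · exact mul_pos_of_neg_of_neg h h
    · exact mul_pos h h
  have hnn : ∀ i ∈ Finset.univ, (0:ℚ) ≤ v i * v i := fun i _ => mul_self_nonneg _
  exact Finset.sum_pos' hnn ⟨j, Finset.mem_univ j, hterm⟩

lemma pairQ_comm (u v : Fin n → ℚ) : pairQ u v = pairQ v u := by
  simp [pairQ, mul_comm]

lemma castZ_add (a b : Fin n → ℤ) : castZ (a + b) = castZ a + castZ b := by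
  funext i; simp [castZ]

lemma castZ_zero : castZ (0 : Fin n → ℤ) = 0 := by funext i; simp [castZ]

lemma castZ_nsmul (c : ℕ) (a : Fin n → ℤ) : castZ (c • a) = (c : ℚ) • castZ a := by
  funext i; simp [castZ]

lemma castZ_inj {a b : Fin n → ℤ} (h : castZ a = castZ b) : a = b := by
  funext i
  have := congrFun h i
  simpa [castZ] using this

lemma pairQ_castZ (a b : Fin n → ℤ) : pairQ (castZ a) (castZ b) = (pairZ a b : ℚ) := by
  simp [pairQ, pairZ, castZ]

lemma pairZ_add_left (x y v : Fin n → ℤ) : pairZ (x + y) v = pairZ x v + pairZ y v := by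
  simp [pairZ, add_mul, Finset.sum_add_distrib]

lemma zero_mem_coneHull (S : Set (Fin n → ℚ)) : (0 : Fin n → ℚ) ∈ coneHull S := by
  exact ⟨∅, fun _ => 0, by simp, by simp, by simp⟩

lemma mem_coneHull_of_mem {S : Set (Fin n → ℚ)} {s : Fin n → ℚ} (hs : s ∈ S) :
    s ∈ coneHull S := by
  refine ⟨{s}, fun _ => 1, by simpa, by simp, by simp⟩

lemma smul_mem_coneHull {S : Set (Fin n → ℚ)} {v : Fin n → ℚ} {q : ℚ}
    (hq : 0 ≤ q) (hv : v ∈ coneHull S) : q • v ∈ coneHull S := by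
  obtain ⟨T, c, hTS, hc, rfl⟩ := hv
  refine ⟨T, fun x => q * c x, hTS, fun x hx => mul_nonneg hq (hc x hx), ?_⟩
  rw [Finset.smul_sum]
  exact Finset.sum_congr rfl fun x _ => by rw [smul_smul]

/-- pairing of `u` with an element of the cone hull, lower bound by nonnegativity on `S`. -/
lemma pairQ_nonneg_of_mem_coneHull {S : Finset (Fin n → ℚ)} {u v : Fin n → ℚ}
    (hu : ∀ s ∈ S, 0 ≤ pairQ u s) (hv : v ∈ coneHull (S : Set (Fin n → ℚ))) :
    0 ≤ pairQ u v := by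
  obtain ⟨T, c, hTS, hc, rfl⟩ := hv
  rw [pairQ_sum_right]
  refine Finset.sum_nonneg fun x hx => ?_
  rw [pairQ_smul_right]
  exact mul_nonneg (hc x hx) (hu x (hTS hx))

lemma mem_dualCone_coneHull_iff {S : Finset (Fin n → ℚ)} {u : Fin n → ℚ} :
    u ∈ dualCone (coneHull (S : Set (Fin n → ℚ))) ↔ ∀ s ∈ S, 0 ≤ pairQ u s := by
  constructor
  · exact fun h s hs => h s (mem_coneHull_of_mem hs)
  · exact fun h v hv => pairQ_nonneg_of_mem_coneHull h hv

/-- cone over an indexed finite family. -/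
def coneF {N : ℕ} (g : Fin N → (Fin n → ℚ)) : Set (Fin n → ℚ) :=
  {v | ∃ c : Fin N → ℚ, (∀ i, 0 ≤ c i) ∧ v = ∑ i, c i • g i}

lemma farkas_coneF : ∀ (N : ℕ) (g : Fin N → (Fin n → ℚ)) (v : Fin n → ℚ),
    v ∉ coneF g → ∃ u, (∀ i, 0 ≤ pairQ u (g i)) ∧ pairQ u v < 0 := by
  intro N
  induction N with
  | zero =>
    intro g v hv
    have hv0 : v ≠ 0 := by
      intro h
      exact hv ⟨fun i => 0, fun i => le_refl 0, by simp [h]⟩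
    refine ⟨-v, fun i => i.elim0, ?_⟩
    have := pairQ_self_pos hv0
    have : pairQ (-v) v = -pairQ v v := by
      have : (-v) = (-1 : ℚ) • v := by funext i; simp
      rw [this, pairQ_smul_left]; ring
    linarith [pairQ_self_pos hv0]
  | succ N ih =>
    intro g v hv
    set w := g 0 with hw
    set T : Fin N → (Fin n → ℚ) := fun i => g i.succ with hT
    have hsub : ∀ x ∈ coneF T, x ∈ coneF g := by
      rintro x ⟨c, hc, rfl⟩
      refine ⟨Fin.cases 0 c, ?_, ?_⟩
      · intro i; induction i using Fin.cases <;> simp [hc]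
      · rw [Fin.sum_univ_succ]; simp
        rfl
    have hvT : v ∉ coneF T := fun h => hv (hsub v h)
    obtain ⟨u, hu1, hu2⟩ := ih T v hvT
    by_cases hw0 : 0 ≤ pairQ u w
    · refine ⟨u, ?_, hu2⟩
      intro i
      induction i using Fin.cases with
      | zero => exact hw0
      | succ j => exact hu1 j
    · push_neg at hw0
      set α := pairQ u w with hα
      have hαne : α ≠ 0 := ne_of_lt hw0
      set π : (Fin n → ℚ) → (Fin n → ℚ) := fun x => x - (pairQ u x / α) • w with hπ
      have hπeq : ∀ x, π x = x - (pairQ u x / α) • w := fun x => rfl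
      have hπpair : ∀ x, pairQ u (π x) = 0 := by
        intro x
        rw [hπeq, pairQ_sub_right, pairQ_smul_right, ← hα]
        field_simp
        ring
      have hπv : π v ∉ coneF (fun i => π (T i)) := by
        rintro ⟨lam, hlam, hlameq⟩
        apply hv
        set μ := (pairQ u v - ∑ i, lam i * pairQ u (T i)) / α with hμ
        have hμpos : 0 < μ := by
          have h1 : 0 ≤ ∑ i, lam i * pairQ u (T i) :=
            Finset.sum_nonneg fun i _ => mul_nonneg (hlam i) (hu1 i)
          have h2 : pairQ u v - ∑ i, lam i * pairQ u (T i) < 0 := by linarith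
          exact div_pos_of_neg_of_neg h2 hw0
        have hveq : v = μ • w + ∑ i, lam i • T i := by
          have h3 : v = π v + (pairQ u v / α) • w := by
            rw [hπeq]; abel
          rw [h3, hlameq]
          have h4 : ∀ i, lam i • π (T i) = lam i • T i - (lam i * (pairQ u (T i) / α)) • w := by
            intro i
            rw [hπeq, smul_sub, smul_smul]
          rw [Finset.sum_congr rfl (fun i _ => h4 i), Finset.sum_sub_distrib, ← Finset.sum_smul]
          have h5 : (∑ i, lam i * (pairQ u (T i) / α)) = (∑ i, lam i * pairQ u (T i)) / α := by
            rw [Finset.sum_div]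
            exact Finset.sum_congr rfl fun i _ => by field_simp
          rw [h5, hμ]
          have : (pairQ u v - ∑ i, lam i * pairQ u (T i)) / α
              = pairQ u v / α - (∑ i, lam i * pairQ u (T i)) / α := by ring
          rw [this]
          module
        refine ⟨Fin.cases μ lam, ?_, ?_⟩
        · intro i
          induction i using Fin.cases with
          | zero => exact le_of_lt hμpos
          | succ j => exact hlam j
        · rw [Fin.sum_univ_succ, hveq]
          simp
          rfl
      obtain ⟨u₁, hu₁1, hu₁2⟩ := ih (fun i => π (T i)) (π v) hπv
      set u₂ := u₁ - (pairQ u₁ w / α) • u with hu₂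
      have hkey : ∀ x, pairQ u₂ x = pairQ u₁ (π x) := by
        intro x
        rw [hu₂, pairQ_sub_left, pairQ_smul_left, hπeq, pairQ_sub_right, pairQ_smul_right]
        ring
      refine ⟨u₂, ?_, ?_⟩
      · intro i
        induction i using Fin.cases with
        | zero =>
          rw [hkey, hπeq, ← hα, div_self hαne, one_smul, sub_self, pairQ_zero_right]
        | succ j => rw [hkey]; exact hu₁1 j
      · rw [hkey]; exact hu₁2


lemma coneHull_eq_coneF (S : Finset (Fin n → ℚ)) :
    coneHull (S : Set (Fin n → ℚ)) = coneF (fun i : Fin S.card => (S.equivFin.symm i : Fin n → ℚ)) := by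
  classical
  ext v
  constructor
  · rintro ⟨T, c, hTS, hc, rfl⟩
    set cc : (Fin n → ℚ) → ℚ := fun x => if x ∈ T then c x else 0 with hcc
    have h1 : ∑ x ∈ T, c x • x = ∑ x ∈ S, cc x • x := by
      rw [show ∑ x ∈ T, c x • x = ∑ x ∈ T, cc x • x from
        Finset.sum_congr rfl (fun x hx => by simp [hcc, hx])]
      exact Finset.sum_subset (Finset.coe_subset.mp hTS) (fun x _ hx => by simp [hcc, hx])
    have h2 : ∑ x ∈ S, cc x • x = ∑ i : Fin S.card, cc (S.equivFin.symm i : Fin n → ℚ) • (S.equivFin.symm i : Fin n → ℚ) := by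
      rw [← Finset.sum_coe_sort S (fun x => cc x • x)]
      exact (Equiv.sum_comp S.equivFin.symm (fun a : ↥S => cc (a : Fin n → ℚ) • (a : Fin n → ℚ))).symm
    refine ⟨fun i => cc (S.equivFin.symm i : Fin n → ℚ), ?_, by rw [h1, h2]⟩
    intro i
    by_cases hx : (S.equivFin.symm i : Fin n → ℚ) ∈ T
    · simp only [hcc, if_pos hx]; exact hc _ hx
    · simp [hcc, hx]
  · rintro ⟨c, hc, rfl⟩
    set cc : (Fin n → ℚ) → ℚ := fun x => if hx : x ∈ S then c (S.equivFin ⟨x, hx⟩) else 0 with hcc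
    refine ⟨S, cc, subset_rfl, ?_, ?_⟩
    · intro x hx; simp only [hcc, dif_pos hx]; exact hc _
    · rw [← Finset.sum_coe_sort S (fun x => cc x • x)]
      rw [← Equiv.sum_comp S.equivFin.symm (fun a : ↥S => cc (a : Fin n → ℚ) • (a : Fin n → ℚ))]
      refine Finset.sum_congr rfl fun i _ => ?_
      have hmem := (S.equivFin.symm i).2
      simp only [hcc, dif_pos hmem]
      congr 1
      rw [Subtype.coe_eta, Equiv.apply_symm_apply]

lemma farkas_coneHull {S : Finset (Fin n → ℚ)} {v : Fin n → ℚ}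
    (hv : v ∉ coneHull (S : Set (Fin n → ℚ))) :
    ∃ u, (∀ s ∈ S, 0 ≤ pairQ u s) ∧ pairQ u v < 0 := by
  rw [coneHull_eq_coneF] at hv
  obtain ⟨u, hu1, hu2⟩ := farkas_coneF _ _ v hv
  refine ⟨u, ?_, hu2⟩
  intro s hs
  have := hu1 (S.equivFin ⟨s, hs⟩)
  simpa using this

lemma mem_coneHull_of_dual {S : Finset (Fin n → ℚ)} {v : Fin n → ℚ}
    (h : ∀ u, (∀ s ∈ S, 0 ≤ pairQ u s) → 0 ≤ pairQ u v) :
    v ∈ coneHull (S : Set (Fin n → ℚ)) := by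
  by_contra hv
  obtain ⟨u, hu1, hu2⟩ := farkas_coneHull hv
  exact absurd (h u hu1) (not_le.mpr hu2)

lemma pairZ_zero_left (v : Fin n → ℤ) : pairZ 0 v = 0 := by simp [pairZ]

lemma pairZ_neg_left (x v : Fin n → ℤ) : pairZ (-x) v = - pairZ x v := by
  simp [pairZ]

lemma exists_int_smul (u : Fin n → ℚ) :
    ∃ (m : Fin n → ℤ) (K : ℕ), 0 < K ∧ castZ m = (K : ℚ) • u := by
  classical
  set K : ℕ := ∏ i, (u i).den with hK
  have hKpos : 0 < K := Finset.prod_pos (fun i _ => (u i).pos)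
  refine ⟨fun i => (u i).num * ((K / (u i).den : ℕ) : ℤ), K, hKpos, ?_⟩
  funext i
  have hdvd : (u i).den ∣ K := Finset.dvd_prod_of_mem _ (Finset.mem_univ i)
  have hden : ((u i).den : ℚ) ≠ 0 := by
    have : 0 < ((u i).den : ℚ) := by exact_mod_cast (u i).pos
    exact this.ne'
  simp only [castZ, Pi.smul_apply, smul_eq_mul]
  rw [Int.cast_mul]
  rw [show (((K / (u i).den : ℕ) : ℤ) : ℚ) = ((K / (u i).den : ℕ) : ℚ) from by norm_cast]
  rw [Nat.cast_div hdvd hden]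
  have h := (u i).num_div_den
  rw [div_eq_iff hden] at h
  field_simp
  rw [h]
  ring

lemma closure_singleton_neg (a : ℤ) :
    AddSubgroup.closure ({-a} : Set ℤ) = AddSubgroup.closure {a} := by
  ext x
  simp only [AddSubgroup.mem_closure_singleton]
  constructor
  · rintro ⟨m, rfl⟩; exact ⟨-m, by simp only [smul_eq_mul]; ring⟩
  · rintro ⟨m, rfl⟩; exact ⟨-m, by simp only [smul_eq_mul]; ring⟩

lemma exists_primitive {s : Fin n → ℚ} (hs : s ≠ 0) :
    ∃ (ρ u₀ : Fin n → ℤ) (μ : ℚ), 0 < μ ∧ castZ ρ = μ • s ∧ pairZ u₀ ρ = 1 := by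
  classical
  obtain ⟨z₀, K, hKpos, hz₀⟩ := exists_int_smul s
  have hz₀ne : z₀ ≠ 0 := by
    intro h
    apply hs
    have : (K : ℚ) • s = 0 := by rw [← hz₀, h]; funext i; simp [castZ]
    have hKne : (K : ℚ) ≠ 0 := by positivity
    funext i
    have := congrFun this i
    simp only [Pi.smul_apply, smul_eq_mul, Pi.zero_apply] at this
    have := mul_eq_zero.mp this
    tauto
  set H : AddSubgroup ℤ :=
    { carrier := {x | ∃ m : Fin n → ℤ, pairZ m z₀ = x}
      zero_mem' := ⟨0, pairZ_zero_left z₀⟩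
      add_mem' := by rintro x y ⟨m1, rfl⟩ ⟨m2, rfl⟩; exact ⟨m1 + m2, pairZ_add_left m1 m2 z₀⟩
      neg_mem' := by rintro x ⟨m1, rfl⟩; exact ⟨-m1, pairZ_neg_left m1 z₀⟩ } with hH
  obtain ⟨a₀, ha₀⟩ := Int.subgroup_cyclic H
  have hmain : ∃ a : ℤ, 0 ≤ a ∧ H = AddSubgroup.closure {a} := by
    rcases le_or_gt 0 a₀ with h | h
    · exact ⟨a₀, h, ha₀⟩
    · exact ⟨-a₀, by omega, by rw [closure_singleton_neg]; exact ha₀⟩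
  obtain ⟨a, hanonneg, ha⟩ := hmain
  have hcoord : ∀ j, z₀ j ∈ H := by
    intro j
    refine ⟨Pi.single j 1, ?_⟩
    simp only [pairZ]
    rw [Finset.sum_eq_single j]
    · simp
    · intro i _ hij; simp [Pi.single_apply, hij]
    · intro h; exact absurd (Finset.mem_univ j) h
  have hane : a ≠ 0 := by
    intro h0
    apply hz₀ne
    funext j
    have := hcoord j
    rw [ha, h0, AddSubgroup.mem_closure_singleton] at this
    obtain ⟨m, hm⟩ := this
    simpa using hm.symm
  have hco : ∀ j, ∃ m : ℤ, m * a = z₀ j := by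
    intro j
    have := hcoord j
    rw [ha, AddSubgroup.mem_closure_singleton] at this
    obtain ⟨m, hm⟩ := this
    exact ⟨m, by rw [← hm]; exact (zsmul_eq_mul a m).symm ▸ rfl⟩
  choose κ hκ using hco
  have haH : a ∈ H := by
    rw [ha]; exact AddSubgroup.subset_closure rfl
  obtain ⟨u₀, hu₀⟩ := haH
  have hz₀eq : ∀ j, z₀ j = a * κ j := fun j => by rw [← hκ j]; ring
  have hpair1 : pairZ u₀ κ = 1 := by
    have h1 : pairZ u₀ z₀ = pairZ u₀ κ * a := by
      simp only [pairZ]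
      rw [Finset.sum_mul]
      exact Finset.sum_congr rfl fun i _ => by rw [hz₀eq i]; ring
    have h2 : pairZ u₀ κ * a = 1 * a := by rw [← h1, hu₀, one_mul]
    exact mul_right_cancel₀ hane h2
  have hapos : 0 < a := lt_of_le_of_ne hanonneg (Ne.symm hane)
  refine ⟨κ, u₀, (K : ℚ) / (a : ℚ), ?_, ?_, hpair1⟩
  · apply div_pos
    · exact_mod_cast hKpos
    · exact_mod_cast hapos
  · funext i
    have haQ : (a : ℚ) ≠ 0 := Int.cast_ne_zero.mpr hane
    have h3 : (z₀ i : ℚ) = (K : ℚ) * s i := by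
      have := congrFun hz₀ i
      simpa [castZ] using this
    simp only [castZ, Pi.smul_apply, smul_eq_mul]
    rw [div_mul_eq_mul_div, eq_div_iff haQ]
    have h4 : (z₀ i : ℚ) = (a : ℚ) * (κ i : ℚ) := by exact_mod_cast congrArg Int.cast (hz₀eq i)
    push_cast at h3 h4 ⊢
    nlinarith [h3, h4]

lemma prim_cond3 {ρ u₀ : Fin n → ℤ} (h1 : pairZ u₀ ρ = 1) :
    ∀ u : Fin n → ℤ, (∃ q : ℚ, 0 ≤ q ∧ castZ u = q • castZ ρ) → ∃ c : ℕ, u = c • ρ := by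
  rintro u ⟨q, hq, hu⟩
  have hq' : pairQ (castZ u₀) (castZ u) = q := by
    rw [hu, pairQ_smul_right, pairQ_castZ, h1]
    simp
  have hqz : q = ((pairZ u₀ u : ℤ) : ℚ) := by rw [← hq', pairQ_castZ]
  set c' : ℤ := pairZ u₀ u with hc'
  have hc'nonneg : 0 ≤ c' := by
    have : (0 : ℚ) ≤ (c' : ℚ) := by rw [← hqz]; exact hq
    exact_mod_cast this
  refine ⟨c'.toNat, ?_⟩
  funext j
  have h5 := congrFun hu j
  simp only [castZ, Pi.smul_apply, smul_eq_mul] at h5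
  rw [hqz] at h5
  have h6 : u j = c' * ρ j := by exact_mod_cast h5
  simp only [Pi.smul_apply, smul_eq_mul, nsmul_eq_mul]
  rw [h6, Int.toNat_of_nonneg hc'nonneg]

lemma pairQ_sum_left {α : Type*} (T : Finset α) (f : α → (Fin n → ℚ)) (y : Fin n → ℚ) :
    pairQ (∑ x ∈ T, f x) y = ∑ x ∈ T, pairQ (f x) y := by
  classical
  induction T using Finset.induction_on with
  | empty => simp [pairQ]
  | insert _ _ h ih => rw [Finset.sum_insert h, Finset.sum_insert h, pairQ_add_left, ih]

lemma castZ_sum {α : Type*} (T : Finset α) (g : α → (Fin n → ℤ)) :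
    castZ (∑ a ∈ T, g a) = ∑ a ∈ T, castZ (g a) := by
  classical
  induction T using Finset.induction_on with
  | empty => simp [castZ_zero]
  | insert _ _ h ih => rw [Finset.sum_insert h, Finset.sum_insert h, castZ_add, ih]

lemma castZ_sub (a b : Fin n → ℤ) : castZ (a - b) = castZ a - castZ b := by
  funext i; simp [castZ]

lemma pairZ_nsmul_left (c : ℕ) (x v : Fin n → ℤ) : pairZ (c • x) v = (c : ℤ) * pairZ x v := by
  simp only [pairZ, Pi.smul_apply, smul_eq_mul, Finset.mul_sum]
  push_cast
  exact Finset.sum_congr rfl fun i _ => by ring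

section Alg

variable {k : Type*} [Field k] {P : AddSubmonoid (Fin n → ℤ)}
  (δ : LFIHD k (AddMonoidAlgebra k P)) (e : Fin n → ℤ)

open Classical in
/-- coefficient of the LFIHD on the monomial basis. -/
noncomputable def coefC (i : ℕ) (m : P) : k :=
  if h : ((m : Fin n → ℤ) + i • e) ∈ P then
    (δ.D i (AddMonoidAlgebra.single m 1)).coeff ⟨(m : Fin n → ℤ) + i • e, h⟩
  else 0

variable (hhom : IsHomogeneousOfDegree δ e)

open Classical in
include hhom in
lemma D_single_eq (i : ℕ) (m : P) :
    δ.D i (AddMonoidAlgebra.single m 1) =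
      if h : ((m : Fin n → ℤ) + i • e) ∈ P then
        AddMonoidAlgebra.single (⟨(m : Fin n → ℤ) + i • e, h⟩ : P) (coefC δ e i m)
      else 0 := by
  classical
  split_ifs with h
  · ext m'
    by_cases hm' : (m' : Fin n → ℤ) = (m : Fin n → ℤ) + i • e
    · have hm'' : m' = (⟨(m : Fin n → ℤ) + i • e, h⟩ : P) := Subtype.ext hm'
      subst hm''
      rw [AddMonoidAlgebra.coeff_single_apply, if_pos rfl]
      rw [coefC, dif_pos h]
    · have h1 : (δ.D i (AddMonoidAlgebra.single m 1)).coeff m' = 0 := by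
        by_contra hc
        exact hm' (hhom i m m' hc)
      rw [h1, AddMonoidAlgebra.coeff_single_apply, if_neg]
      intro hcon
      exact hm' (congrArg Subtype.val hcon).symm
  · ext m'
    have h1 : (δ.D i (AddMonoidAlgebra.single m 1)).coeff m' = 0 := by
      by_contra hc
      have := hhom i m m' hc
      exact h (this ▸ m'.2)
    simp [h1]

lemma coefC_mem (i : ℕ) (m : P) (hc : coefC δ e i m ≠ 0) :
    ((m : Fin n → ℤ) + i • e) ∈ P := by
  by_contra h
  rw [coefC, dif_neg h] at hc
  exact hc rfl

lemma coefC_zero (m : P) : coefC δ e 0 m = 1 := by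
  have h : ((m : Fin n → ℤ) + (0 : ℕ) • e) ∈ P := by
    simpa using m.2
  rw [coefC, dif_pos h]
  have h2 : (⟨(m : Fin n → ℤ) + (0 : ℕ) • e, h⟩ : P) = m := by
    apply Subtype.ext; simp
  rw [δ.D_zero, h2]
  simp [AddMonoidAlgebra.coeff_single_apply]

lemma coefC_bdd (m : P) : ∃ N : ℕ, ∀ i, N ≤ i → coefC δ e i m = 0 := by
  obtain ⟨N, hN⟩ := δ.locally_finite (AddMonoidAlgebra.single m 1)
  refine ⟨N, fun i hi => ?_⟩
  rw [coefC]
  split_ifs with h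
  · rw [hN i hi]; rfl
  · rfl

/-- the degree function. -/
noncomputable def degD (m : P) : ℕ := sSup {i | coefC δ e i m ≠ 0}

lemma degD_nonempty (m : P) : {i | coefC δ e i m ≠ 0}.Nonempty :=
  ⟨0, by simp [coefC_zero]⟩

lemma degD_bddAbove (m : P) : BddAbove {i | coefC δ e i m ≠ 0} := by
  obtain ⟨N, hN⟩ := coefC_bdd δ e m
  refine ⟨N, fun i hi => ?_⟩
  by_contra hlt
  exact hi (hN i (by omega))

lemma coefC_degD_ne_zero (m : P) : coefC δ e (degD δ e m) m ≠ 0 :=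
  Nat.sSup_mem (degD_nonempty δ e m) (degD_bddAbove δ e m)

lemma coefC_eq_zero_of_gt {m : P} {i : ℕ} (hi : degD δ e m < i) : coefC δ e i m = 0 := by
  by_contra hc
  have h2 := le_csSup (degD_bddAbove δ e m) hc
  simp only [degD] at hi
  omega

lemma mem_P_add_degD (m : P) : ((m : Fin n → ℤ) + degD δ e m • e) ∈ P :=
  coefC_mem δ e _ m (coefC_degD_ne_zero δ e m)

include hhom in
lemma coefC_conv (i : ℕ) (m m' : P) :
    coefC δ e i (m + m') = ∑ j ∈ Finset.range (i + 1), coefC δ e j m * coefC δ e (i - j) m' := by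
  classical
  have harith : ∀ j ∈ Finset.range (i + 1),
      ((m : Fin n → ℤ) + j • e) + ((m' : Fin n → ℤ) + (i - j) • e)
        = ((m + m' : P) : Fin n → ℤ) + i • e := by
    intro j hj
    have hji : j ≤ i := by simpa [Nat.lt_succ_iff] using hj
    push_cast [AddSubmonoid.coe_add]
    have : j • e + (i - j) • e = i • e := by
      rw [← add_nsmul, Nat.add_sub_cancel' hji]
    rw [show ((m : Fin n → ℤ) + j • e) + ((m' : Fin n → ℤ) + (i - j) • e)
        = ((m : Fin n → ℤ) + (m' : Fin n → ℤ)) + (j • e + (i - j) • e) by abel, this]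
  by_cases h : (((m + m' : P) : Fin n → ℤ) + i • e) ∈ P
  · have hL := δ.leibniz i (AddMonoidAlgebra.single m 1) (AddMonoidAlgebra.single m' 1)
    rw [AddMonoidAlgebra.single_mul_single, one_mul] at hL
    rw [coefC, dif_pos h, hL, AddMonoidAlgebra.coeff_sum, Finsupp.finset_sum_apply]
    refine Finset.sum_congr rfl fun j hj => ?_
    rw [D_single_eq δ e hhom j m, D_single_eq δ e hhom (i - j) m']
    by_cases h1 : ((m : Fin n → ℤ) + j • e) ∈ P
    · by_cases h2 : ((m' : Fin n → ℤ) + (i - j) • e) ∈ P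
      · rw [dif_pos h1, dif_pos h2, AddMonoidAlgebra.single_mul_single]
        have hpt : ((⟨(m : Fin n → ℤ) + j • e, h1⟩ : P) + ⟨(m' : Fin n → ℤ) + (i - j) • e, h2⟩)
            = (⟨((m + m' : P) : Fin n → ℤ) + i • e, h⟩ : P) := Subtype.ext (harith j hj)
        rw [hpt, AddMonoidAlgebra.coeff_single_apply, if_pos rfl]
      · have hz : coefC δ e (i - j) m' = 0 := by rw [coefC, dif_neg h2]
        rw [dif_neg h2, hz, mul_zero, mul_zero]
        rfl
    · have hz : coefC δ e j m = 0 := by rw [coefC, dif_neg h1]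
      rw [dif_neg h1, hz, zero_mul, zero_mul]
      rfl
  · rw [coefC, dif_neg h]
    symm
    apply Finset.sum_eq_zero
    intro j hj
    by_cases h1 : ((m : Fin n → ℤ) + j • e) ∈ P
    · by_cases h2 : ((m' : Fin n → ℤ) + (i - j) • e) ∈ P
      · exfalso
        apply h
        rw [← harith j hj]
        exact P.add_mem h1 h2
      · have hz : coefC δ e (i - j) m' = 0 := by rw [coefC, dif_neg h2]
        rw [hz, mul_zero]
    · have hz : coefC δ e j m = 0 := by rw [coefC, dif_neg h1]
      rw [hz, zero_mul]

include hhom in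
lemma degD_add (m m' : P) : degD δ e (m + m') = degD δ e m + degD δ e m' := by
  classical
  set d1 := degD δ e m with hd1
  set d2 := degD δ e m' with hd2
  have hne : coefC δ e (d1 + d2) (m + m') ≠ 0 := by
    rw [coefC_conv δ e hhom]
    rw [Finset.sum_eq_single_of_mem d1 (by simp [Finset.mem_range])]
    · have : d1 + d2 - d1 = d2 := by omega
      rw [this]
      exact mul_ne_zero (coefC_degD_ne_zero δ e m) (coefC_degD_ne_zero δ e m')
    · intro j hj hjne
      rcases lt_or_gt_of_ne hjne with hlt | hgt
      · have : d2 < d1 + d2 - j := by omega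
        rw [coefC_eq_zero_of_gt δ e this, mul_zero]
      · rw [coefC_eq_zero_of_gt δ e (by omega : degD δ e m < j), zero_mul]
  have hle : degD δ e (m + m') ≤ d1 + d2 := by
    apply csSup_le (degD_nonempty δ e (m + m'))
    intro b hb
    by_contra hgt
    apply hb
    rw [coefC_conv δ e hhom]
    apply Finset.sum_eq_zero
    intro j hj
    by_cases hjd : j ≤ d1
    · have : d2 < b - j := by omega
      rw [coefC_eq_zero_of_gt δ e this, mul_zero]
    · rw [coefC_eq_zero_of_gt δ e (by omega : degD δ e m < j), zero_mul]
  have hge : d1 + d2 ≤ degD δ e (m + m') := le_csSup (degD_bddAbove δ e (m + m')) hne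
  omega

include hhom in
/-- the top shift lands in the kernel. -/
lemma degD_shift_eq_zero (m : P) :
    degD δ e (⟨(m : Fin n → ℤ) + degD δ e m • e, mem_P_add_degD δ e m⟩ : P) = 0 := by
  classical
  set d := degD δ e m with hd
  set pt : P := ⟨(m : Fin n → ℤ) + d • e, mem_P_add_degD δ e m⟩ with hpt
  have hzero : ∀ a : ℕ, 0 < a → coefC δ e a pt = 0 := by
    intro a ha
    have hIt := δ.iterative a d (AddMonoidAlgebra.single m 1)
    rw [D_single_eq δ e hhom d m, dif_pos (mem_P_add_degD δ e m)] at hIt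
    have hsm : AddMonoidAlgebra.single pt (coefC δ e d m)
        = coefC δ e d m • AddMonoidAlgebra.single pt 1 := by
      rw [AddMonoidAlgebra.smul_single', mul_one]
    rw [hsm, map_smul] at hIt
    have hRz : δ.D (a + d) (AddMonoidAlgebra.single m 1) = 0 := by
      rw [D_single_eq δ e hhom (a + d) m]
      split_ifs with hmem
      · rw [coefC_eq_zero_of_gt δ e (by omega : degD δ e m < a + d)]
        exact AddMonoidAlgebra.single_zero _
      · rfl
    rw [hRz, smul_zero] at hIt
    have hDz : δ.D a (AddMonoidAlgebra.single pt 1) = 0 := by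
      rcases smul_eq_zero.mp hIt with hc | hz
      · exact absurd hc (coefC_degD_ne_zero δ e m)
      · exact hz
    rw [coefC]
    split_ifs with hmem
    · rw [hDz]; rfl
    · rfl
  by_contra hne
  exact coefC_degD_ne_zero δ e pt (hzero _ (Nat.pos_of_ne_zero hne))

include hhom in
lemma D_single_eq_zero {m : P} (hm : degD δ e m = 0) {i : ℕ} (hi : 0 < i) :
    δ.D i (AddMonoidAlgebra.single m 1) = 0 := by
  rw [D_single_eq δ e hhom i m]
  split_ifs with hmem
  · rw [coefC_eq_zero_of_gt δ e (by omega : degD δ e m < i)]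
    exact AddMonoidAlgebra.single_zero _
  · rfl


lemma D_eq_sum (i : ℕ) (f : AddMonoidAlgebra k P) :
    δ.D i f = ∑ m' ∈ f.coeff.support, f.coeff m' • δ.D i (AddMonoidAlgebra.single m' 1) := by
  conv_lhs => rw [← AddMonoidAlgebra.sum_coeff_single f]
  rw [map_finsuppSum]
  rw [Finsupp.sum]
  refine Finset.sum_congr rfl fun m' _ => ?_
  have : AddMonoidAlgebra.single m' (f.coeff m') = f.coeff m' • AddMonoidAlgebra.single m' 1 := by
    rw [AddMonoidAlgebra.smul_single', mul_one]
  rw [this, map_smul]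

include hhom in
lemma ker_iff (f : AddMonoidAlgebra k P) :
    f ∈ δ.ker ↔ ∀ m : P, f.coeff m ≠ 0 → degD δ e m = 0 := by
  classical
  constructor
  · intro hker m hfm
    by_contra hd
    have hdpos : 0 < degD δ e m := Nat.pos_of_ne_zero hd
    set i := degD δ e m with hi
    have hmem := mem_P_add_degD δ e m
    set q : P := ⟨(m : Fin n → ℤ) + i • e, hmem⟩ with hq
    have hDf := hker i hdpos
    have heval : (δ.D i f).coeff q = f.coeff m * coefC δ e i m := by
      rw [D_eq_sum]
      rw [AddMonoidAlgebra.coeff_sum, Finsupp.finset_sum_apply]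
      rw [Finset.sum_eq_single_of_mem m (Finsupp.mem_support_iff.mpr hfm)]
      · rw [AddMonoidAlgebra.coeff_smul, Finsupp.smul_apply, D_single_eq δ e hhom i m, dif_pos hmem]
        rw [AddMonoidAlgebra.coeff_single_apply, if_pos rfl, smul_eq_mul]
      · intro m' _ hm'ne
        rw [AddMonoidAlgebra.coeff_smul, Finsupp.smul_apply, D_single_eq δ e hhom i m']
        split_ifs with hmem'
        · rw [AddMonoidAlgebra.coeff_single_apply, if_neg, smul_zero]
          intro hcon
          apply hm'ne
          apply Subtype.ext
          have := congrArg Subtype.val hcon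
          simpa [hq] using this
        · rw [AddMonoidAlgebra.coeff_zero, Finsupp.coe_zero, Pi.zero_apply, smul_zero]
    rw [hDf] at heval
    have : f.coeff m * coefC δ e i m = 0 := by rw [← heval]; rfl
    rcases mul_eq_zero.mp this with h | h
    · exact hfm h
    · exact coefC_degD_ne_zero δ e m h
  · intro hsupp i hipos
    rw [D_eq_sum]
    apply Finset.sum_eq_zero
    intro m' hm'
    rw [D_single_eq_zero δ e hhom (hsupp m' (Finsupp.mem_support_iff.mp hm')) hipos, smul_zero]

include hhom in
lemma exists_pos_degD (hnt : δ.IsNontrivial) : ∃ m₀ : P, 0 < degD δ e m₀ := by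
  obtain ⟨f, i, hipos, hne⟩ := hnt
  by_contra hall
  push_neg at hall
  apply hne
  rw [D_eq_sum]
  apply Finset.sum_eq_zero
  intro m' _
  rw [D_single_eq_zero δ e hhom (Nat.le_zero.mp (hall m')) hipos, smul_zero]

end Alg


end Aux19

open Aux19

set_option maxHeartbeats 4000000 in
/-- Let `σ ⊆ N_ℚ` be a nonzero strongly convex polyhedral cone and `δ` a
nontrivial homogeneous LFIHD on `A = k[σ^∨ ∩ M]` of degree `e`. Then there is a ray `ρ` of
`σ` with `ker δ = k[ρ* ∩ M]`, and `e` is a Demazure root of `σ` with distinguished ray `ρ`;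
in particular `e ∉ σ^∨`. -/
theorem stmt19 {n : ℕ} (k : Type*) [Field k]
    (σ : Set (Fin n → ℚ)) (hσpoly : IsPolyhedralCone σ) (hσconv : IsStronglyConvex σ)
    (hσne : σ ≠ {0})
    (P : AddSubmonoid (Fin n → ℤ)) (hPmem : ∀ m : Fin n → ℤ, m ∈ P ↔ castZ m ∈ dualCone σ)
    (δ : LFIHD k (AddMonoidAlgebra k P)) (e : Fin n → ℤ)
    (hnt : δ.IsNontrivial) (hhom : IsHomogeneousOfDegree δ e) :
    (∃ ρ : Fin n → ℤ, IsRayGen σ ρ ∧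
      (∀ f : AddMonoidAlgebra k P,
        f ∈ δ.ker ↔ ∀ m : P, f.coeff m ≠ 0 → pairZ (m : Fin n → ℤ) ρ = 0) ∧
      IsDemazureRootWith σ e ρ) ∧
    castZ e ∉ dualCone σ := by
  classical
  obtain ⟨S, hS⟩ := hσpoly
  have hPdual : ∀ m : P, castZ (m : Fin n → ℤ) ∈ dualCone σ := fun m => (hPmem _).1 m.2
  have hPpos : ∀ (m : P) (v : Fin n → ℚ), v ∈ σ → 0 ≤ pairQ (castZ (m : Fin n → ℤ)) v :=
    fun m v hv => hPdual m v hv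
  have hSσ : ∀ s ∈ S, s ∈ σ := fun s hs => by rw [hS]; exact mem_coneHull_of_mem hs
  have hmemP : ∀ z : Fin n → ℤ, (∀ s ∈ S, 0 ≤ pairQ (castZ z) s) → z ∈ P := by
    intro z hz
    rw [hPmem z, hS]
    exact mem_dualCone_coneHull_iff.mpr hz
  have hspan : ∀ x : Fin n → ℚ, (∀ m : P, pairQ (castZ (m : Fin n → ℤ)) x = 0) → x = 0 := by
    intro x hx
    have hdual0 : ∀ u ∈ dualCone σ, pairQ u x = 0 := by
      intro u hu
      obtain ⟨mz, K, hKpos, hmz⟩ := exists_int_smul u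
      have hmzP : mz ∈ P := by
        rw [hPmem mz]
        intro v hv
        rw [hmz, pairQ_smul_left]
        exact mul_nonneg (by positivity) (hu v hv)
      have h1 : pairQ (castZ mz) x = 0 := hx ⟨mz, hmzP⟩
      rw [hmz, pairQ_smul_left] at h1
      rcases mul_eq_zero.mp h1 with h | h
      · exact absurd h (by positivity)
      · exact h
    have hmem : ∀ y : Fin n → ℚ, (∀ u ∈ dualCone σ, pairQ u y = 0) → y ∈ σ := by
      intro y hy
      rw [hS]
      apply mem_coneHull_of_dual
      intro u hu
      have huD : u ∈ dualCone σ := by rw [hS]; exact mem_dualCone_coneHull_iff.mpr hu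
      rw [hy u huD]
    have hx1 : x ∈ σ := hmem x hdual0
    have hx2 : -x ∈ σ := hmem (-x) (fun u hu => by rw [pairQ_neg_right, hdual0 u hu, neg_zero])
    exact hσconv x hx1 hx2
  obtain ⟨m₀, hd₀⟩ := exists_pos_degD δ e hhom hnt
  have hD0 : degD δ e (0 : P) = 0 := by
    have h := degD_add δ e hhom 0 0
    rw [add_zero] at h
    omega
  have hDsum : ∀ (T : Finset (Fin n → ℚ)) (F : (Fin n → ℚ) → P),
      (∀ s ∈ T, degD δ e (F s) = 0) → degD δ e (∑ s ∈ T, F s) = 0 := by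
    intro T F
    induction T using Finset.induction_on with
    | empty => intro _; simpa using hD0
    | @insert a T' hnm ih =>
      intro hF
      rw [Finset.sum_insert hnm, degD_add δ e hhom, hF a (Finset.mem_insert_self a T'),
        ih (fun s hs => hF s (Finset.mem_insert_of_mem hs))]
  have hDnsmul : ∀ (K : ℕ) (w : P), degD δ e w = 0 → degD δ e (K • w) = 0 := by
    intro K w hw
    induction K with
    | zero => simpa using hD0
    | succ K ih => rw [succ_nsmul, degD_add δ e hhom, ih, hw]
  have hshift0 := degD_shift_eq_zero δ e hhom
  have hgen : ∀ (m : P) (y : Fin n → ℚ),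
      pairQ (castZ ((m : Fin n → ℤ) + degD δ e m • e)) y
        = pairQ (castZ (m : Fin n → ℤ)) y + (degD δ e m : ℚ) * pairQ (castZ e) y := by
    intro m y
    rw [castZ_add, castZ_nsmul, pairQ_add_left, pairQ_smul_left]
  have hws : ∃ s ∈ S, s ≠ 0 ∧ ∀ w : P, degD δ e w = 0 → pairQ (castZ (w : Fin n → ℤ)) s = 0 := by
    by_contra hcon
    push_neg at hcon
    have hcon' : ∀ s, s ∈ S ∧ s ≠ 0 →
        ∃ w : P, degD δ e w = 0 ∧ 0 < pairQ (castZ (w : Fin n → ℤ)) s := by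
      rintro s ⟨hsS, hs0⟩
      obtain ⟨w, hw0, hwne⟩ := hcon s hsS hs0
      exact ⟨w, hw0, lt_of_le_of_ne (hPpos w s (hSσ s hsS)) (Ne.symm hwne)⟩
    set F : (Fin n → ℚ) → P := fun s =>
      if h : s ∈ S ∧ s ≠ 0 then Classical.choose (hcon' s h) else 0 with hF
    set w0 : P := ∑ s ∈ S, F s with hw0def
    have hFd : ∀ s ∈ S, degD δ e (F s) = 0 := by
      intro s hs
      by_cases h : s ∈ S ∧ s ≠ 0
      · simp only [hF, dif_pos h]
        exact (Classical.choose_spec (hcon' s h)).1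
      · simp only [hF, dif_neg h]; exact hD0
    have hdw0 : degD δ e w0 = 0 := hDsum S F hFd
    have hcast : castZ ((w0 : P) : Fin n → ℤ) = ∑ s ∈ S, castZ ((F s : P) : Fin n → ℤ) := by
      rw [hw0def]
      rw [show ((∑ s ∈ S, F s : P) : Fin n → ℤ) = ∑ s ∈ S, ((F s : P) : Fin n → ℤ) from
        AddSubmonoidClass.coe_finset_sum F S]
      exact castZ_sum S _
    have hw0pos : ∀ s ∈ S, s ≠ 0 → 0 < pairQ (castZ ((w0 : P) : Fin n → ℤ)) s := by
      intro s hsS hs0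
      rw [hcast, pairQ_sum_left]
      have hterm : ∀ x ∈ S, 0 ≤ pairQ (castZ ((F x : P) : Fin n → ℤ)) s :=
        fun x _ => hPpos (F x) s (hSσ s hsS)
      have hspos : 0 < pairQ (castZ ((F s : P) : Fin n → ℤ)) s := by
        have h : s ∈ S ∧ s ≠ 0 := ⟨hsS, hs0⟩
        simp only [hF, dif_pos h]
        exact (Classical.choose_spec (hcon' s h)).2
      exact Finset.sum_pos' hterm ⟨s, hsS, hspos⟩
    obtain ⟨K, hK⟩ := exists_nat_ge (∑ s ∈ S,
      max (pairQ (castZ (m₀ : Fin n → ℤ)) s / pairQ (castZ ((w0 : P) : Fin n → ℤ)) s) 0)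
    have hKbig : ∀ s ∈ S, s ≠ 0 →
        pairQ (castZ (m₀ : Fin n → ℤ)) s ≤ K * pairQ (castZ ((w0 : P) : Fin n → ℤ)) s := by
      intro s hsS hs0
      have hpos := hw0pos s hsS hs0
      have h1 : pairQ (castZ (m₀ : Fin n → ℤ)) s / pairQ (castZ ((w0 : P) : Fin n → ℤ)) s
          ≤ (K : ℚ) := by
        calc pairQ (castZ (m₀ : Fin n → ℤ)) s / pairQ (castZ ((w0 : P) : Fin n → ℤ)) s
            ≤ max (pairQ (castZ (m₀ : Fin n → ℤ)) s / pairQ (castZ ((w0 : P) : Fin n → ℤ)) s) 0 :=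
              le_max_left _ _
          _ ≤ ∑ s ∈ S, max (pairQ (castZ (m₀ : Fin n → ℤ)) s / pairQ (castZ ((w0 : P) : Fin n → ℤ)) s) 0 :=
              Finset.single_le_sum
                (f := fun t => max (pairQ (castZ (m₀ : Fin n → ℤ)) t / pairQ (castZ ((w0 : P) : Fin n → ℤ)) t) 0)
                (fun x _ => le_max_right _ 0) hsS
          _ ≤ (K : ℚ) := hK
      rw [div_le_iff₀ hpos] at h1
      linarith
    have hzP : (K • ((w0 : P) : Fin n → ℤ) - (m₀ : Fin n → ℤ)) ∈ P := by
      apply hmemP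
      intro s hsS
      rw [castZ_sub, castZ_nsmul, pairQ_sub_left, pairQ_smul_left, sub_nonneg]
      by_cases hs0 : s = 0
      · subst hs0; rw [pairQ_zero_right, pairQ_zero_right, mul_zero]
      · exact hKbig s hsS hs0
    have hsum : (⟨K • ((w0 : P) : Fin n → ℤ) - (m₀ : Fin n → ℤ), hzP⟩ : P) + m₀ = K • w0 := by
      apply Subtype.ext
      show (K • ((w0 : P) : Fin n → ℤ) - (m₀ : Fin n → ℤ)) + (m₀ : Fin n → ℤ)
          = ((K • w0 : P) : Fin n → ℤ)
      rw [show ((K • w0 : P) : Fin n → ℤ) = K • ((w0 : P) : Fin n → ℤ) from rfl]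
      exact sub_add_cancel _ _
    have hcontr : degD δ e (⟨K • ((w0 : P) : Fin n → ℤ) - (m₀ : Fin n → ℤ), hzP⟩ : P)
        + degD δ e m₀ = 0 := by
      rw [← degD_add δ e hhom, hsum, hDnsmul K w0 hdw0]
    omega
  obtain ⟨sQ, hsS, hsne, hsW⟩ := hws
  have hsσ : sQ ∈ σ := hSσ sQ hsS
  have hWe : ∀ (m : P) (y : Fin n → ℚ),
      (∀ w : P, degD δ e w = 0 → pairQ (castZ (w : Fin n → ℤ)) y = 0) →
      pairQ (castZ (m : Fin n → ℤ)) y + (degD δ e m : ℚ) * pairQ (castZ e) y = 0 := by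
    intro m y hy
    have hkey : pairQ (castZ ((m : Fin n → ℤ) + degD δ e m • e)) y = 0 :=
      hy ⟨_, mem_P_add_degD δ e m⟩ (hshift0 m)
    rw [hgen m y] at hkey
    exact hkey
  have hβle : pairQ (castZ e) sQ ≤ 0 := by
    have h1 := hWe m₀ sQ hsW
    have h2 := hPpos m₀ sQ hsσ
    have h3 : (0 : ℚ) < (degD δ e m₀ : ℚ) := by exact_mod_cast hd₀
    nlinarith
  have hβne : pairQ (castZ e) sQ ≠ 0 := by
    intro h0
    apply hsne
    apply hspan
    intro m
    have h1 := hWe m sQ hsW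
    rw [h0, mul_zero, add_zero] at h1
    exact h1
  have hβ : pairQ (castZ e) sQ < 0 := lt_of_le_of_ne hβle hβne
  have hWiff : ∀ m : P, degD δ e m = 0 ↔ pairQ (castZ (m : Fin n → ℤ)) sQ = 0 := by
    intro m
    constructor
    · exact hsW m
    · intro h
      have h1 := hWe m sQ hsW
      rw [h, zero_add] at h1
      have h2 : (degD δ e m : ℚ) = 0 := by
        rcases mul_eq_zero.mp h1 with h' | h'
        · exact h'
        · exact absurd h' hβne
      exact_mod_cast h2
  have hperp : ∀ x : Fin n → ℚ,
      (∀ w : P, degD δ e w = 0 → pairQ (castZ (w : Fin n → ℤ)) x = 0) →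
      x = (pairQ (castZ e) x / pairQ (castZ e) sQ) • sQ := by
    intro x hx
    have hsub : x - (pairQ (castZ e) x / pairQ (castZ e) sQ) • sQ = 0 := by
      apply hspan
      intro m
      rw [pairQ_sub_right, pairQ_smul_right]
      have e1 : pairQ (castZ (m : Fin n → ℤ)) x
          = -((degD δ e m : ℚ)) * pairQ (castZ e) x := by linarith [hWe m x hx]
      have e2 : pairQ (castZ (m : Fin n → ℤ)) sQ
          = -((degD δ e m : ℚ)) * pairQ (castZ e) sQ := by linarith [hWe m sQ hsW]
      rw [e1, e2]
      field_simp
      ring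
    exact sub_eq_zero.mp hsub
  have hmplus : ∃ m : P, 0 < pairQ (castZ (m : Fin n → ℤ)) sQ := by
    by_contra h
    push_neg at h
    apply hsne
    apply hspan
    intro m
    exact le_antisymm (h m) (hPpos m sQ hsσ)
  obtain ⟨ρ, u₀, μ, hμpos, hρcast, hu₀ρ⟩ := exists_primitive hsne
  have hρσ : castZ ρ ∈ σ := by
    rw [hρcast, hS]
    exact smul_mem_coneHull hμpos.le (mem_coneHull_of_mem hsS)
  have hρne : ρ ≠ 0 := by
    intro h
    apply hsne
    have h0 : castZ ρ = 0 := by rw [h]; exact castZ_zero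
    rw [hρcast] at h0
    rcases smul_eq_zero.mp h0 with h' | h'
    · exact absurd h' hμpos.ne'
    · exact h'
  have hpairρ : ∀ mz : Fin n → ℤ, (pairZ mz ρ : ℚ) = μ * pairQ (castZ mz) sQ := by
    intro mz
    rw [← pairQ_castZ, hρcast, pairQ_smul_right]
  have hWiffρ : ∀ m : P, degD δ e m = 0 ↔ pairZ (m : Fin n → ℤ) ρ = 0 := by
    intro m
    rw [hWiff m]
    constructor
    · intro h
      have h1 : (pairZ (m : Fin n → ℤ) ρ : ℚ) = 0 := by rw [hpairρ, h, mul_zero]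
      exact_mod_cast h1
    · intro h
      have h1 : (pairZ (m : Fin n → ℤ) ρ : ℚ) = 0 := by exact_mod_cast h
      rw [hpairρ] at h1
      rcases mul_eq_zero.mp h1 with h2 | h2
      · exact absurd h2 hμpos.ne'
      · exact h2
  have hexw : ∀ s ∈ S, ¬(∃ q : ℚ, 0 ≤ q ∧ s = q • castZ ρ) →
      ∃ w : P, degD δ e w = 0 ∧ 0 < pairQ (castZ (w : Fin n → ℤ)) s := by
    intro s hsS' hray
    by_contra hno
    push_neg at hno
    have hz : ∀ w : P, degD δ e w = 0 → pairQ (castZ (w : Fin n → ℤ)) s = 0 :=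
      fun w hw => le_antisymm (hno w hw) (hPpos w s (hSσ s hsS'))
    have hs_eq := hperp s hz
    obtain ⟨mp, hmp⟩ := hmplus
    have hcoef : 0 ≤ pairQ (castZ e) s / pairQ (castZ e) sQ := by
      have h1 : 0 ≤ pairQ (castZ (mp : Fin n → ℤ)) s := hPpos mp s (hSσ s hsS')
      rw [hs_eq, pairQ_smul_right] at h1
      by_contra hneg
      push_neg at hneg
      nlinarith
    apply hray
    refine ⟨(pairQ (castZ e) s / pairQ (castZ e) sQ) / μ, div_nonneg hcoef hμpos.le, ?_⟩
    rw [hρcast, smul_smul, div_mul_cancel₀ _ hμpos.ne']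
    exact hs_eq
  have hGex : ∀ s, s ∈ S ∧ ¬(∃ q : ℚ, 0 ≤ q ∧ s = q • castZ ρ) →
      ∃ w : P, degD δ e w = 0 ∧ 0 < pairQ (castZ (w : Fin n → ℤ)) s :=
    fun s h => hexw s h.1 h.2
  set G : (Fin n → ℚ) → P := fun s =>
    if h : s ∈ S ∧ ¬(∃ q : ℚ, 0 ≤ q ∧ s = q • castZ ρ) then Classical.choose (hGex s h) else 0
    with hGdef
  set wst : P := ∑ s ∈ S, G s with hwstdef
  have hGd : ∀ s ∈ S, degD δ e (G s) = 0 := by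
    intro s hs
    by_cases h : s ∈ S ∧ ¬(∃ q : ℚ, 0 ≤ q ∧ s = q • castZ ρ)
    · simp only [hGdef, dif_pos h]
      exact (Classical.choose_spec (hGex s h)).1
    · simp only [hGdef, dif_neg h]; exact hD0
  have hdwst : degD δ e wst = 0 := hDsum S G hGd
  have hcastwst : castZ ((wst : P) : Fin n → ℤ) = ∑ s ∈ S, castZ ((G s : P) : Fin n → ℤ) := by
    rw [hwstdef]
    rw [show ((∑ s ∈ S, G s : P) : Fin n → ℤ) = ∑ s ∈ S, ((G s : P) : Fin n → ℤ) from
      AddSubmonoidClass.coe_finset_sum G S]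
    exact castZ_sum S _
  have hwstray : ∀ s ∈ S, ¬(∃ q : ℚ, 0 ≤ q ∧ s = q • castZ ρ) →
      0 < pairQ (castZ ((wst : P) : Fin n → ℤ)) s := by
    intro s hsS' hr
    rw [hcastwst, pairQ_sum_left]
    have hterm : ∀ x ∈ S, 0 ≤ pairQ (castZ ((G x : P) : Fin n → ℤ)) s :=
      fun x _ => hPpos (G x) s (hSσ s hsS')
    have hspos : 0 < pairQ (castZ ((G s : P) : Fin n → ℤ)) s := by
      have h : s ∈ S ∧ ¬(∃ q : ℚ, 0 ≤ q ∧ s = q • castZ ρ) := ⟨hsS', hr⟩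
      simp only [hGdef, dif_pos h]
      exact (Classical.choose_spec (hGex s h)).2
    exact Finset.sum_pos' hterm ⟨s, hsS', hspos⟩
  have hwst_sQ : pairQ (castZ ((wst : P) : Fin n → ℤ)) sQ = 0 := hsW wst hdwst
  have hwst_ρ : pairQ (castZ ((wst : P) : Fin n → ℤ)) (castZ ρ) = 0 := by
    rw [hρcast, pairQ_smul_right, hwst_sQ, mul_zero]
  have hwst_dual : castZ ((wst : P) : Fin n → ℤ) ∈ dualCone σ := hPdual wst
  have hexpose : σ ∩ {v | pairQ (castZ ((wst : P) : Fin n → ℤ)) v = 0}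
      = {v | ∃ q : ℚ, 0 ≤ q ∧ v = q • castZ ρ} := by
    apply Set.Subset.antisymm
    · rintro v ⟨hvσ, hv0⟩
      rw [hS] at hvσ
      obtain ⟨T, c, hTS, hc, rfl⟩ := hvσ
      simp only [Set.mem_setOf_eq] at hv0
      rw [pairQ_sum_right] at hv0
      simp only [pairQ_smul_right] at hv0
      have hxS : ∀ x ∈ T, x ∈ S := fun x hx => by exact_mod_cast hTS (Finset.mem_coe.mpr hx)
      have hterm0 : ∀ x ∈ T, c x * pairQ (castZ ((wst : P) : Fin n → ℤ)) x = 0 := by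
        intro x hx
        refine (Finset.sum_eq_zero_iff_of_nonneg ?_).mp hv0 x hx
        intro y hy
        exact mul_nonneg (hc y hy) (hPpos wst y (hSσ y (hxS y hy)))
      set qf : (Fin n → ℚ) → ℚ := fun x =>
        if hx : ∃ q : ℚ, 0 ≤ q ∧ x = q • castZ ρ then Classical.choose hx else 0 with hqf
      have hqf_nonneg : ∀ x, 0 ≤ qf x := by
        intro x
        by_cases hx : ∃ q : ℚ, 0 ≤ q ∧ x = q • castZ ρ
        · simp only [hqf, dif_pos hx]
          exact (Classical.choose_spec hx).1
        · simp only [hqf, dif_neg hx]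
          exact le_refl 0
      have hqf_eq : ∀ x ∈ T, c x • x = (c x * qf x) • castZ ρ := by
        intro x hx
        by_cases hcx : c x = 0
        · rw [hcx, zero_smul, zero_mul, zero_smul]
        · have hpx : pairQ (castZ ((wst : P) : Fin n → ℤ)) x = 0 := by
            rcases mul_eq_zero.mp (hterm0 x hx) with h | h
            · exact absurd h hcx
            · exact h
          have hrayx : ∃ q : ℚ, 0 ≤ q ∧ x = q • castZ ρ := by
            by_contra hr
            exact absurd hpx (ne_of_gt (hwstray x (hxS x hx) hr))
          have hspec := Classical.choose_spec hrayx
          simp only [hqf, dif_pos hrayx]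
          have hcongr := congrArg (fun y => c x • y) hspec.2
          rw [hcongr, smul_smul]
      refine ⟨∑ x ∈ T, c x * qf x,
        Finset.sum_nonneg (fun x hx => mul_nonneg (hc x hx) (hqf_nonneg x)), ?_⟩
      rw [Finset.sum_smul]
      exact Finset.sum_congr rfl hqf_eq
    · rintro v ⟨q, hq, rfl⟩
      refine ⟨?_, ?_⟩
      · rw [hS]
        exact smul_mem_coneHull hq (by rw [← hS]; exact hρσ)
      · show pairQ (castZ ((wst : P) : Fin n → ℤ)) (q • castZ ρ) = 0
        rw [pairQ_smul_right, hwst_ρ, mul_zero]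
  obtain ⟨K2, hK2⟩ := exists_nat_ge (∑ s ∈ S,
    max (-(pairQ (castZ u₀) s) / pairQ (castZ ((wst : P) : Fin n → ℤ)) s) 0)
  have hzP2 : (u₀ + K2 • ((wst : P) : Fin n → ℤ)) ∈ P := by
    apply hmemP
    intro s hsS'
    rw [castZ_add, castZ_nsmul, pairQ_add_left, pairQ_smul_left]
    by_cases hr : ∃ q : ℚ, 0 ≤ q ∧ s = q • castZ ρ
    · obtain ⟨q, hq, rfl⟩ := hr
      rw [pairQ_smul_right, pairQ_smul_right, pairQ_castZ, hu₀ρ, hwst_ρ]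
      push_cast
      nlinarith
    · have hpos := hwstray s hsS' hr
      have h1 : -(pairQ (castZ u₀) s) / pairQ (castZ ((wst : P) : Fin n → ℤ)) s ≤ (K2 : ℚ) := by
        calc -(pairQ (castZ u₀) s) / pairQ (castZ ((wst : P) : Fin n → ℤ)) s
            ≤ max (-(pairQ (castZ u₀) s) / pairQ (castZ ((wst : P) : Fin n → ℤ)) s) 0 :=
              le_max_left _ _
          _ ≤ ∑ s ∈ S, max (-(pairQ (castZ u₀) s) / pairQ (castZ ((wst : P) : Fin n → ℤ)) s) 0 :=
              Finset.single_le_sum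
                (f := fun t => max (-(pairQ (castZ u₀) t) / pairQ (castZ ((wst : P) : Fin n → ℤ)) t) 0)
                (fun x _ => le_max_right _ 0) hsS'
          _ ≤ (K2 : ℚ) := hK2
      rw [div_le_iff₀ hpos] at h1
      linarith
  have hm1 : pairZ (u₀ + K2 • ((wst : P) : Fin n → ℤ)) ρ = 1 := by
    rw [pairZ_add_left, pairZ_nsmul_left]
    have h2 : pairZ ((wst : P) : Fin n → ℤ) ρ = 0 := (hWiffρ wst).mp hdwst
    rw [h2, hu₀ρ]
    ring
  have hWZ : ∀ m : P, pairZ (m : Fin n → ℤ) ρ + (degD δ e m : ℤ) * pairZ e ρ = 0 := by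
    intro m
    have h1 : pairZ ((m : Fin n → ℤ) + degD δ e m • e) ρ = 0 :=
      (hWiffρ ⟨_, mem_P_add_degD δ e m⟩).mp (hshift0 m)
    rw [pairZ_add_left, pairZ_nsmul_left] at h1
    exact h1
  have hde : pairZ e ρ = -1 := by
    have h1 := hWZ ⟨u₀ + K2 • ((wst : P) : Fin n → ℤ), hzP2⟩
    have h2 : pairZ ((⟨u₀ + K2 • ((wst : P) : Fin n → ℤ), hzP2⟩ : P) : Fin n → ℤ) ρ = 1 := hm1
    rw [h2] at h1
    have hd2 : ((degD δ e (⟨u₀ + K2 • ((wst : P) : Fin n → ℤ), hzP2⟩ : P) : ℤ))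
        * (-(pairZ e ρ)) = 1 := by linarith
    rcases Int.mul_eq_one_iff_eq_one_or_neg_one.mp hd2 with ⟨ha, hb⟩ | ⟨ha, hb⟩
    · linarith
    · exfalso
      omega
  have henot : castZ e ∉ dualCone σ := by
    intro h
    have h1 : 0 ≤ pairQ (castZ e) (castZ ρ) := h (castZ ρ) hρσ
    rw [pairQ_castZ, hde] at h1
    norm_num at h1
  have hraygen : IsRayGen σ ρ :=
    ⟨hρσ, hρne, prim_cond3 hu₀ρ, castZ ((wst : P) : Fin n → ℤ), hwst_dual, hexpose⟩
  have hothers : ∀ ρ' : Fin n → ℤ, IsRayGen σ ρ' → ρ' = ρ ∨ 0 ≤ pairZ e ρ' := by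
    intro ρ' hρ'
    rcases le_or_gt 0 (pairZ e ρ') with hge | hlt
    · exact Or.inr hge
    refine Or.inl ?_
    obtain ⟨hρ'σ, hρ'ne, hρ'prim, u', hu'dual, hu'exp⟩ := hρ'
    by_cases hw : pairQ (castZ ((wst : P) : Fin n → ℤ)) (castZ ρ') = 0
    · have hmem2 : castZ ρ' ∈ σ ∩ {v | pairQ (castZ ((wst : P) : Fin n → ℤ)) v = 0} :=
        ⟨hρ'σ, hw⟩
      rw [hexpose] at hmem2
      obtain ⟨q, hq, hq'⟩ := hmem2
      have hqne : q ≠ 0 := by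
        intro h0
        apply hρ'ne
        rw [h0, zero_smul] at hq'
        funext j
        have := congrFun hq' j
        simpa [castZ] using this
      obtain ⟨c, hc⟩ := prim_cond3 hu₀ρ ρ' ⟨q, hq, hq'⟩
      obtain ⟨c', hc'⟩ := hρ'prim ρ
        ⟨q⁻¹, inv_nonneg.mpr hq, by rw [hq', smul_smul, inv_mul_cancel₀ hqne, one_smul]⟩
      have hcc : ρ' = (c * c') • ρ' := by rw [mul_smul, ← hc', ← hc]
      obtain ⟨j, hj⟩ : ∃ j, ρ' j ≠ 0 := by
        by_contra hall
        push_neg at hall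
        exact hρ'ne (funext hall)
      have h1 : ρ' j = ((c * c' : ℕ) : ℤ) * ρ' j := by
        have := congrFun hcc j
        simpa [Pi.smul_apply, nsmul_eq_mul] using this
      have h2 : (((c * c' : ℕ) : ℤ) - 1) * ρ' j = 0 := by linarith
      have h3 : ((c * c' : ℕ) : ℤ) = 1 := by
        rcases mul_eq_zero.mp h2 with h' | h'
        · linarith
        · exact absurd h' hj
      have h4 : c * c' = 1 := by exact_mod_cast h3
      have hc1 : c = 1 := Nat.eq_one_of_mul_eq_one_right (by rwa [mul_comm] at h4)
      rw [hc, hc1, one_smul]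
    · exfalso
      have hwpos : 0 < pairQ (castZ ((wst : P) : Fin n → ℤ)) (castZ ρ') :=
        lt_of_le_of_ne (hPpos wst (castZ ρ') hρ'σ) (Ne.symm hw)
      have hW' : ∀ m : P, pairQ (castZ (m : Fin n → ℤ)) (castZ ρ') = 0 → degD δ e m = 0 := by
        intro m hm0
        have h1 : 0 ≤ pairQ (castZ ((m : Fin n → ℤ) + degD δ e m • e)) (castZ ρ') :=
          hPpos ⟨_, mem_P_add_degD δ e m⟩ (castZ ρ') hρ'σ
        rw [hgen m (castZ ρ'), hm0, zero_add, pairQ_castZ] at h1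
        have h2 : (pairZ e ρ' : ℚ) < 0 := by exact_mod_cast hlt
        by_contra hne0
        have hpos3 : (0 : ℚ) < (degD δ e m : ℚ) := by
          exact_mod_cast Nat.pos_of_ne_zero hne0
        nlinarith
      have hsQperp : ∀ u : Fin n → ℚ,
          (∀ s ∈ insert (castZ ρ') (insert (-castZ ρ') S), 0 ≤ pairQ u s) →
          pairQ u sQ = 0 := by
        intro u hu
        have huρ'1 : 0 ≤ pairQ u (castZ ρ') := hu _ (Finset.mem_insert_self _ _)
        have huρ'2 : 0 ≤ pairQ u (-castZ ρ') :=
          hu _ (Finset.mem_insert_of_mem (Finset.mem_insert_self _ _))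
        rw [pairQ_neg_right] at huρ'2
        have huρ' : pairQ u (castZ ρ') = 0 := le_antisymm (by linarith) huρ'1
        have huS : ∀ s ∈ S, 0 ≤ pairQ u s := fun s hs =>
          hu s (Finset.mem_insert_of_mem (Finset.mem_insert_of_mem hs))
        obtain ⟨mu, Ku, hKu, hmu⟩ := exists_int_smul u
        have hmuP : mu ∈ P := hmemP mu (fun s hs => by
          rw [hmu, pairQ_smul_left]
          exact mul_nonneg (by positivity) (huS s hs))
        have hmuρ' : pairQ (castZ mu) (castZ ρ') = 0 := by
          rw [hmu, pairQ_smul_left, huρ', mul_zero]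
        have hdmu : degD δ e ⟨mu, hmuP⟩ = 0 := hW' ⟨mu, hmuP⟩ hmuρ'
        have hmusQ : pairQ (castZ mu) sQ = 0 := hsW ⟨mu, hmuP⟩ hdmu
        rw [hmu, pairQ_smul_left] at hmusQ
        rcases mul_eq_zero.mp hmusQ with h' | h'
        · exact absurd h' (by positivity)
        · exact h'
      have hnegsQ : -sQ ∈ coneHull ((insert (castZ ρ') (insert (-castZ ρ') S) : Finset (Fin n → ℚ)) : Set (Fin n → ℚ)) := by
        apply mem_coneHull_of_dual
        intro u hu
        rw [pairQ_neg_right, hsQperp u hu, neg_zero]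
      have hu'ρ' : pairQ u' (castZ ρ') = 0 := by
        have hmem3 : castZ ρ' ∈ {v | ∃ q : ℚ, 0 ≤ q ∧ v = q • castZ ρ'} :=
          ⟨1, by norm_num, (one_smul _ _).symm⟩
        rw [← hu'exp] at hmem3
        exact hmem3.2
      have hu'SC : ∀ s ∈ insert (castZ ρ') (insert (-castZ ρ') S), 0 ≤ pairQ u' s := by
        intro s hs
        rcases Finset.mem_insert.mp hs with rfl | hs2
        · rw [hu'ρ']
        rcases Finset.mem_insert.mp hs2 with rfl | hs3
        · rw [pairQ_neg_right, hu'ρ', neg_zero]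
        · exact hu'dual s (hSσ s hs3)
      have h1 : 0 ≤ pairQ u' (-sQ) := pairQ_nonneg_of_mem_coneHull hu'SC hnegsQ
      rw [pairQ_neg_right] at h1
      have h2 : 0 ≤ pairQ u' sQ := hu'dual sQ hsσ
      have h3 : pairQ u' sQ = 0 := le_antisymm (by linarith) h2
      have h4 : sQ ∈ σ ∩ {v | pairQ u' v = 0} := ⟨hsσ, h3⟩
      rw [hu'exp] at h4
      obtain ⟨q, hq, hq'⟩ := h4
      have h5 : pairQ (castZ ((wst : P) : Fin n → ℤ)) sQ
          = q * pairQ (castZ ((wst : P) : Fin n → ℤ)) (castZ ρ') := by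
        rw [hq', pairQ_smul_right]
      rw [hwst_sQ] at h5
      have hq0 : q = 0 := by
        rcases mul_eq_zero.mp h5.symm with h' | h'
        · exact h'
        · exact absurd h' hw
      apply hsne
      rw [hq', hq0, zero_smul]
  refine ⟨⟨ρ, hraygen, ?_, hraygen, hde, hothers⟩, henot⟩
  intro f
  rw [ker_iff δ e hhom f]
  constructor
  · intro h m hm
    exact (hWiffρ m).mp (h m hm)
  · intro h m hm
    exact (hWiffρ m).mpr (h m hm)
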